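/- Let V be a Hermitian complex vector space of complex dimension n ≥ 4 (as a complex inner product space). Then V admits no 2-fold complex vector cross product: there is no (3,0)-form φ on V with |ι_{e₁∧e₂}φ| = 2^{3/2} for all orthonormal e₁, e₂ ∈ V^{1,0}. -/

import Mathlib

open scoped RealInnerProductSpace
open ComplexConjugate

lemma vcp_upd0 {α : Type*} (x y w u : α) : Function.update ![x,y,w] 0 u = ![u,y,w] := by
  funext i; fin_cases i <;> simp [Function.update]

lemma vcp_upd1 {α : Type*} (x y w u : α) : Function.update ![x,y,w] 1 u = ![x,u,w] := by
  funext i; fin_cases i <;> simp [Function.update]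

lemma vcp_upd2 {α : Type*} (x y w u : α) : Function.update ![x,y,w] 2 u = ![x,y,u] := by
  funext i; fin_cases i <;> simp [Function.update]

lemma vcp_cswap {α : Type*} (x y w : α) : ![x,y,w] ∘ Equiv.swap 0 1 = ![y,x,w] := by
  funext i; fin_cases i <;> simp [Equiv.swap_apply_def]

lemma unitary_family_exists
    {V : Type*} [NormedAddCommGroup V] [InnerProductSpace ℝ V]
    [FiniteDimensional ℝ V]
    (J : V →ₗ[ℝ] V) (hJ2 : ∀ v : V, J (J v) = -v)
    (hJg : ∀ u v : V, ⟪J u, J v⟫ = ⟪u, v⟫) :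
    ∀ k : ℕ, 2 * k ≤ Module.finrank ℝ V →
      ∃ a : Fin k → V, (∀ i, ⟪a i, a i⟫ = 1) ∧
        (∀ i j, i ≠ j → ⟪a i, a j⟫ = 0) ∧ (∀ i j, ⟪a i, J (a j)⟫ = 0) := by
  have hswap : ∀ u v : V, ⟪u, J v⟫ = -⟪J u, v⟫ := by
    intro u v
    have h := hJg (J u) v
    rw [hJ2, inner_neg_left] at h
    linarith
  intro k
  induction k with
  | zero => exact fun _ => ⟨fun i => 0, by simp, by simp, by simp⟩
  | succ k ih =>
    intro hk
    obtain ⟨a, h1, h2, h3⟩ := ih (by omega)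
    set W : Submodule ℝ V := Submodule.span ℝ (Set.range (Sum.elim a (J ∘ a))) with hW
    have hdimW : Module.finrank ℝ W ≤ 2 * k := by
      refine (finrank_range_le_card (Sum.elim a (J ∘ a))).trans ?_
      simp [two_mul]
    have hne : Wᗮ ≠ ⊥ := by
      intro h
      have hT : W = ⊤ := Submodule.orthogonal_eq_bot_iff.mp h
      rw [hT] at hdimW
      rw [finrank_top] at hdimW
      omega
    obtain ⟨v, hvW, hv0⟩ := Submodule.exists_mem_ne_zero_of_ne_bot hne
    set u : V := ‖v‖⁻¹ • v with hu
    have huW : u ∈ Wᗮ := Wᗮ.smul_mem _ hvW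
    have hunorm : ⟪u, u⟫ = 1 := by
      rw [real_inner_self_eq_norm_sq, hu, norm_smul]
      simp [norm_inv, inv_mul_cancel₀ (norm_ne_zero_iff.mpr hv0)]
    have hmem : ∀ i, a i ∈ W ∧ J (a i) ∈ W := by
      intro i
      exact ⟨Submodule.subset_span ⟨Sum.inl i, rfl⟩, Submodule.subset_span ⟨Sum.inr i, rfl⟩⟩
    have hua : ∀ i, ⟪a i, u⟫ = 0 := fun i =>
      (Submodule.mem_orthogonal W u).mp huW _ (hmem i).1
    have huJa : ∀ i, ⟪J (a i), u⟫ = 0 := fun i =>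
      (Submodule.mem_orthogonal W u).mp huW _ (hmem i).2
    set a' : Fin (k+1) → V := Fin.snoc a u with ha'
    have hcases : ∀ i : Fin (k+1), (a' i = u ∧ i = Fin.last k) ∨
        ∃ i' : Fin k, a' i = a i' ∧ i = Fin.castSucc i' := by
      intro i
      by_cases hi : i = Fin.last k
      · left; rw [hi, ha']; exact ⟨Fin.snoc_last _ _, rfl⟩
      · right
        obtain ⟨i', rfl⟩ := Fin.exists_castSucc_eq.mpr hi
        exact ⟨i', Fin.snoc_castSucc _ _ i', rfl⟩
    have hself : ⟪u, J u⟫ = 0 := by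
      have h := hswap u u
      have h2 := real_inner_comm u (J u)
      linarith
    refine ⟨a', ?_, ?_, ?_⟩
    · intro i
      rcases hcases i with ⟨h, _⟩ | ⟨i', h, _⟩ <;> rw [h]
      · exact hunorm
      · exact h1 i'
    · intro i j hij
      rcases hcases i with ⟨hi, hi'⟩ | ⟨i', hi, hi'⟩ <;>
        rcases hcases j with ⟨hj, hj'⟩ | ⟨j', hj, hj'⟩ <;> rw [hi, hj]
      · exact absurd (hi'.trans hj'.symm) hij
      · rw [real_inner_comm]; exact hua j'
      · exact hua i'
      · refine h2 i' j' fun hc => hij ?_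
        rw [hi', hj', hc]
    · intro i j
      rcases hcases i with ⟨hi, _⟩ | ⟨i', hi, _⟩ <;>
        rcases hcases j with ⟨hj, _⟩ | ⟨j', hj, _⟩ <;> rw [hi, hj]
      · exact hself
      · rw [real_inner_comm]; exact huJa j'
      · rw [hswap, huJa i', neg_zero]
      · exact h3 i' j'


set_option maxHeartbeats 2000000 in
/-- A Hermitian complex vector space of complex dimension `n ≥ 4` admits no 2-fold
complex vector cross product: there is no form `φ` of type `(3,0)` (inserting `J` in a
slot multiplies the value by `i`) such that `|ι_{e₁∧e₂}φ| = 2^{3/2}` for all orthonormal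
holomorphic vectors `e₁, e₂ ∈ V^{1,0}`.  In real terms, with `eₖ = (aₖ - iJaₖ)/√2` for
real vectors `a₁, Ja₁, a₂, Ja₂` orthonormal, the Hermitian norm squared of the
contraction `ι_{e₁∧e₂}φ` equals `4 · Σ_b |φ(a₁,a₂,b)|²` over any real orthonormal basis
`b`, so the condition reads `Σ_b |φ(a₁,a₂,b)|² = 2`. -/
theorem no_two_fold_complex_vcp_in_high_dimension
    {V : Type*} [NormedAddCommGroup V] [InnerProductSpace ℝ V]
    [FiniteDimensional ℝ V] (n : ℕ) (hn : 4 ≤ n)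
    (hdim : Module.finrank ℝ V = 2 * n)
    (J : V →ₗ[ℝ] V) (hJ2 : ∀ v : V, J (J v) = -v)
    (hJg : ∀ u v : V, ⟪J u, J v⟫ = ⟪u, v⟫) :
    ¬ ∃ φ : AlternatingMap ℝ V ℂ (Fin 3),
      (∀ (v : Fin 3 → V) (j : Fin 3),
        φ (Function.update v j (J (v j))) = Complex.I * φ v) ∧
      (∀ (b : OrthonormalBasis (Fin (2 * n)) ℝ V) (a₁ a₂ : V),
        Orthonormal ℝ ![a₁, J a₁, a₂, J a₂] →
        ∑ i : Fin (2 * n), ‖φ ![a₁, a₂, b i]‖ ^ 2 = 2) := by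
  rintro ⟨φ, hty, hsum⟩
  -- slot lemmas for φ
  have hJs0 : ∀ x y w : V, φ ![J x, y, w] = Complex.I * φ ![x, y, w] := by
    intro x y w
    have h := hty ![x,y,w] 0
    simp only [Matrix.cons_val_zero] at h
    rwa [vcp_upd0] at h
  have hJs1 : ∀ x y w : V, φ ![x, J y, w] = Complex.I * φ ![x, y, w] := by
    intro x y w
    have h := hty ![x,y,w] 1
    simp only [Matrix.cons_val_one, Matrix.head_cons] at h
    rwa [vcp_upd1] at h
  have hJs2 : ∀ x y w : V, φ ![x, y, J w] = Complex.I * φ ![x, y, w] := by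
    intro x y w
    have h := hty ![x,y,w] 2
    simp only [show (![x,y,w] : Fin 3 → V) 2 = w from rfl] at h
    rwa [vcp_upd2] at h
  have haddL : ∀ x x' y w : V, φ ![x + x', y, w] = φ ![x,y,w] + φ ![x',y,w] := by
    intro x x' y w
    have h := φ.map_update_add ![x,y,w] 0 x x'
    rwa [vcp_upd0, vcp_upd0, vcp_upd0] at h
  have haddM : ∀ x y y' w : V, φ ![x, y + y', w] = φ ![x,y,w] + φ ![x,y',w] := by
    intro x y y' w
    have h := φ.map_update_add ![x,y,w] 1 y y'
    rwa [vcp_upd1, vcp_upd1, vcp_upd1] at h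
  have hsmulL : ∀ (r : ℝ) (x y w : V), φ ![r • x, y, w] = (r : ℂ) * φ ![x,y,w] := by
    intro r x y w
    have h := φ.map_update_smul ![x,y,w] 0 r x
    rw [vcp_upd0, vcp_upd0] at h
    rw [h, Complex.real_smul]
  have hsmulM : ∀ (r : ℝ) (x y w : V), φ ![x, r • y, w] = (r : ℂ) * φ ![x,y,w] := by
    intro r x y w
    have h := φ.map_update_smul ![x,y,w] 1 r y
    rw [vcp_upd1, vcp_upd1] at h
    rw [h, Complex.real_smul]
  have hswapφ : ∀ x y w : V, φ ![y, x, w] = -φ ![x, y, w] := by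
    intro x y w
    have h := φ.map_swap (v := ![x,y,w]) (i := 0) (j := 1) (by decide)
    rwa [vcp_cswap] at h
  -- inner product facts
  have hswap : ∀ u v : V, ⟪u, J v⟫ = -⟪J u, v⟫ := by
    intro u v
    have h := hJg (J u) v
    rw [hJ2, inner_neg_left] at h
    linarith
  have hselfJ : ∀ v : V, ⟪v, J v⟫ = 0 := by
    intro v
    have h := hswap v v
    have h2 := real_inner_comm (J v) v
    linarith
  have hflip : ∀ p q : V, ⟪q, J p⟫ = -⟪p, J q⟫ := by
    intro p q
    rw [hswap q p, real_inner_comm]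
  have hnorm1 : ∀ v : V, ⟪v, v⟫ = 1 → ‖v‖ = 1 := by
    intro v hv
    have h := real_inner_self_eq_norm_sq v
    nlinarith [norm_nonneg v]
  obtain ⟨a, ha1, ha2, ha3⟩ := unitary_family_exists J hJ2 hJg n (le_of_eq hdim.symm)
  have ha3' : ∀ i j, ⟪J (a i), a j⟫ = 0 := by
    intro i j; rw [real_inner_comm]; exact ha3 j i
  -- orth4
  have orth4 : ∀ x y : V, ⟪x,x⟫ = 1 → ⟪y,y⟫ = 1 → ⟪x,y⟫ = 0 → ⟪x, J y⟫ = 0 →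
      Orthonormal ℝ ![x, J x, y, J y] := by
    intro x y hx hy hxy hxJy
    have e1 : ⟪x, J x⟫ = 0 := hselfJ x
    have e2 : ⟪y, J y⟫ = 0 := hselfJ y
    have e3 : ⟪J x, J x⟫ = 1 := by rw [hJg]; exact hx
    have e4 : ⟪J y, J y⟫ = 1 := by rw [hJg]; exact hy
    have e5 : ⟪y, J x⟫ = 0 := by rw [hflip x y, hxJy]; ring
    have e6 : ⟪J x, J y⟫ = 0 := by rw [hJg]; exact hxy
    have e7 : ⟪J x, x⟫ = 0 := by rw [real_inner_comm]; exact e1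
    have e8 : ⟪J y, y⟫ = 0 := by rw [real_inner_comm]; exact e2
    have e9 : ⟪y, x⟫ = 0 := by rw [real_inner_comm]; exact hxy
    have e10 : ⟪J y, x⟫ = 0 := by rw [real_inner_comm]; exact hxJy
    have e11 : ⟪J y, J x⟫ = 0 := by rw [real_inner_comm]; exact e6
    have e12 : ⟪J x, y⟫ = 0 := by rw [real_inner_comm]; exact e5
    rw [orthonormal_iff_ite]
    intro i j
    fin_cases i <;> fin_cases j <;> simp [hnorm1 x hx, hnorm1 y hy, hnorm1 _ e3, hnorm1 _ e4] <;> assumption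
  -- basis construction
  set g : Fin n ⊕ Fin n → V := Sum.elim a (J ∘ a) with hg
  have horthg : Orthonormal ℝ g := by
    rw [orthonormal_iff_ite]
    rintro (i | i) (j | j) <;>
      simp only [hg, Sum.elim_inl, Sum.elim_inr, Function.comp_apply]
    · by_cases h : i = j
      · subst h; simp [hnorm1 _ (ha1 i)]
      · simp [h, ha2 i j h]
    · simp [ha3 i j]
    · simp [ha3' i j]
    · by_cases h : i = j
      · subst h; simp [hnorm1 _ (by rw [hJg]; exact ha1 i)]
      · simp [h]; rw [hJg]; exact ha2 i j h
  set e : (Fin n ⊕ Fin n) ≃ Fin (2*n) := finSumFinEquiv.trans (finCongr (by ring)) with he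
  have horthg' : Orthonormal ℝ (g ∘ e.symm) := horthg.comp _ e.symm.injective
  have hcard : Fintype.card (Fin (2*n)) = Module.finrank ℝ V := by simp [hdim]
  have : Nonempty (Fin (2*n)) := ⟨⟨0, by omega⟩⟩
  have hspan := horthg'.linearIndependent.span_eq_top_of_card_eq_finrank hcard
  set b : OrthonormalBasis (Fin (2*n)) ℝ V := OrthonormalBasis.mk horthg' (le_of_eq hspan.symm)
    with hbdef
  have hb : ∀ s : Fin n ⊕ Fin n, b (e s) = g s := by
    intro s
    rw [hbdef, OrthonormalBasis.coe_mk]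
    simp
  -- the sesquilinear pairing
  set S : (Fin (2*n) → ℂ) → (Fin (2*n) → ℂ) → ℂ :=
    fun p q => ∑ i : Fin (2*n), p i * conj (q i) with hSdef
  set F : V → V → Fin (2*n) → ℂ := fun x y i => φ ![x, y, b i] with hFdef
  have hSaddL : ∀ p p' q, S (p + p') q = S p q + S p' q := by
    intro p p' q
    simp only [hSdef, Pi.add_apply, add_mul, Finset.sum_add_distrib]
  have hSaddR : ∀ p q q', S p (q + q') = S p q + S p q' := by
    intro p q q'
    simp only [hSdef, Pi.add_apply, map_add, mul_add, Finset.sum_add_distrib]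
  have hSsmulL : ∀ (c : ℂ) p q, S (c • p) q = c * S p q := by
    intro c p q
    simp only [hSdef, Pi.smul_apply, smul_eq_mul, Finset.mul_sum, mul_assoc]
  have hSsmulR : ∀ (c : ℂ) p q, S p (c • q) = conj c * S p q := by
    intro c p q
    simp only [hSdef, Pi.smul_apply, smul_eq_mul, map_mul, Finset.mul_sum]
    exact Finset.sum_congr rfl fun i _ => by ring
  have hSnegL : ∀ p q, S (-p) q = -S p q := by
    intro p q
    simp only [hSdef, Pi.neg_apply, neg_mul, Finset.sum_neg_distrib]
  have hSnegR : ∀ p q, S p (-q) = -S p q := by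
    intro p q
    simp only [hSdef, Pi.neg_apply, map_neg, mul_neg, Finset.sum_neg_distrib]
  have hSconj : ∀ p q, S q p = conj (S p q) := by
    intro p q
    simp only [hSdef, map_sum, map_mul, Complex.conj_conj]
    exact Finset.sum_congr rfl fun i _ => by ring
  -- F lemmas
  have hFaddL : ∀ x x' y : V, F (x + x') y = F x y + F x' y := by
    intro x x' y; funext i
    simp only [hFdef, Pi.add_apply]; exact haddL x x' y (b i)
  have hFaddM : ∀ x y y' : V, F x (y + y') = F x y + F x y' := by
    intro x y y'; funext i
    simp only [hFdef, Pi.add_apply]; exact haddM x y y' (b i)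
  have hFsmulL : ∀ (r : ℝ) (x y : V), F (r • x) y = (r : ℂ) • F x y := by
    intro r x y; funext i
    simp only [hFdef, Pi.smul_apply, smul_eq_mul]; exact hsmulL r x y (b i)
  have hFsmulM : ∀ (r : ℝ) (x y : V), F x (r • y) = (r : ℂ) • F x y := by
    intro r x y; funext i
    simp only [hFdef, Pi.smul_apply, smul_eq_mul]; exact hsmulM r x y (b i)
  have hFJL : ∀ x y : V, F (J x) y = Complex.I • F x y := by
    intro x y; funext i
    simp only [hFdef, Pi.smul_apply, smul_eq_mul]; exact hJs0 x y (b i)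
  have hFJM : ∀ x y : V, F x (J y) = Complex.I • F x y := by
    intro x y; funext i
    simp only [hFdef, Pi.smul_apply, smul_eq_mul]; exact hJs1 x y (b i)
  have hFswap : ∀ x y : V, F y x = -F x y := by
    intro x y; funext i
    simp only [hFdef, Pi.neg_apply]; exact hswapφ x y (b i)
  -- self pairing
  have hipself : ∀ x y : V, Orthonormal ℝ ![x, J x, y, J y] → S (F x y) (F x y) = 2 := by
    intro x y h
    have hs := hsum b x y h
    simp only [hSdef, hFdef]
    calc ∑ i : Fin (2*n), φ ![x,y,b i] * conj (φ ![x,y,b i])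
        = ∑ i : Fin (2*n), ((‖φ ![x,y,b i]‖ ^ 2 : ℝ) : ℂ) := by
          refine Finset.sum_congr rfl fun i _ => ?_
          rw [Complex.mul_conj, Complex.sq_norm]
      _ = ((∑ i : Fin (2*n), ‖φ ![x,y,b i]‖ ^ 2 : ℝ) : ℂ) := by
          rw [Complex.ofReal_sum]
      _ = 2 := by rw [hs]; norm_num
  -- polarization constant
  set s : ℝ := (Real.sqrt 2)⁻¹ with hsd
  have hs2 : s^2 = 2⁻¹ := by
    rw [hsd, inv_pow, Real.sq_sqrt (by norm_num : (0:ℝ) ≤ 2)]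
  have hss : (s : ℂ) * conj (s : ℂ) = 2⁻¹ := by
    rw [Complex.conj_ofReal, ← Complex.ofReal_mul,
      show s * s = 2⁻¹ by nlinarith [hs2]]
    norm_num
  -- first orthogonality lemma : shared first slot
  have O1 : ∀ x y z : V, ⟪x,x⟫ = 1 → ⟪y,y⟫ = 1 → ⟪z,z⟫ = 1 → ⟪x,y⟫ = 0 → ⟪x,J y⟫ = 0 →
      ⟪x,z⟫ = 0 → ⟪x,J z⟫ = 0 → ⟪y,z⟫ = 0 → ⟪y,J z⟫ = 0 →
      S (F x y) (F x z) = 0 := by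
    intro x y z hx hy hz hxy hxJy hxz hxJz hyz hyJz
    have E1 := hipself x y (orth4 x y hx hy hxy hxJy)
    have E2 := hipself x z (orth4 x z hx hz hxz hxJz)
    have hu1 : ⟪s • (y + z), s • (y + z)⟫ = 1 := by
      rw [real_inner_smul_left, real_inner_smul_right, real_inner_add_add_self, hy, hz, hyz]
      nlinarith [hs2]
    have hu2 : ⟪x, s • (y + z)⟫ = 0 := by
      rw [real_inner_smul_right, inner_add_right, hxy, hxz]; ring
    have hu3 : ⟪x, J (s • (y + z))⟫ = 0 := by
      rw [map_smul, map_add, real_inner_smul_right, inner_add_right, hxJy, hxJz]; ring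
    have E3 := hipself x (s • (y + z)) (orth4 x _ hx hu1 hu2 hu3)
    rw [hFsmulM, hFaddM] at E3
    simp only [hSsmulL, hSsmulR, hSaddL, hSaddR] at E3
    rw [hSconj (F x y) (F x z), E1, E2] at E3
    have e3 : S (F x y) (F x z) + conj (S (F x y) (F x z)) = 0 := by
      linear_combination 2*E3 -
        2*(4 + S (F x y) (F x z) + conj (S (F x y) (F x z)))*hss
    have hv1 : ⟪s • (y + J z), s • (y + J z)⟫ = 1 := by
      rw [real_inner_smul_left, real_inner_smul_right, real_inner_add_add_self, hy, hyJz,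
        hJg, hz]
      nlinarith [hs2]
    have hv2 : ⟪x, s • (y + J z)⟫ = 0 := by
      rw [real_inner_smul_right, inner_add_right, hxy, hxJz]; ring
    have hv3 : ⟪x, J (s • (y + J z))⟫ = 0 := by
      rw [map_smul, map_add, hJ2, real_inner_smul_right, inner_add_right, hxJy,
        inner_neg_right, hxz]; ring
    have E4 := hipself x (s • (y + J z)) (orth4 x _ hx hv1 hv2 hv3)
    rw [hFsmulM, hFaddM, hFJM] at E4
    simp only [hSsmulL, hSsmulR, hSaddL, hSaddR, Complex.conj_I] at E4
    rw [hSconj (F x y) (F x z), E1, E2] at E4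
    have e4 : Complex.I * conj (S (F x y) (F x z)) - Complex.I * S (F x y) (F x z) = 0 := by
      linear_combination 2*E4 -
        2*(2 - Complex.I * (S (F x y) (F x z)) + Complex.I * conj (S (F x y) (F x z))
          - 2*(Complex.I*Complex.I))*hss + 2*Complex.I_mul_I
    have hcX : conj (S (F x y) (F x z)) = -(S (F x y) (F x z)) := by linear_combination e3
    rw [hcX] at e4
    have h0 : Complex.I * S (F x y) (F x z) = 0 := by linear_combination (-2⁻¹ : ℂ) * e4
    rcases mul_eq_zero.mp h0 with h | h
    · exact absurd h Complex.I_ne_zero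
    · exact h
  -- second orthogonality lemma : disjoint slots
  have O2 : ∀ x y z w : V, ⟪x,x⟫ = 1 → ⟪y,y⟫ = 1 → ⟪z,z⟫ = 1 → ⟪w,w⟫ = 1 →
      ⟪x,y⟫ = 0 → ⟪x,z⟫ = 0 → ⟪x,w⟫ = 0 → ⟪y,z⟫ = 0 → ⟪y,w⟫ = 0 → ⟪z,w⟫ = 0 →
      ⟪x,J y⟫ = 0 → ⟪x,J z⟫ = 0 → ⟪x,J w⟫ = 0 → ⟪y,J z⟫ = 0 → ⟪y,J w⟫ = 0 →
      ⟪z,J w⟫ = 0 → S (F x y) (F z w) = 0 := by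
    intro x y z w hx hy hz hw hxy hxz hxw hyz hyw hzw hJxy hJxz hJxw hJyz hJyw hJzw
    have hyJx : ⟪y, J x⟫ = 0 := by rw [hflip x y, hJxy]; ring
    have hzJx : ⟪z, J x⟫ = 0 := by rw [hflip x z, hJxz]; ring
    have hzJy : ⟪z, J y⟫ = 0 := by rw [hflip y z, hJyz]; ring
    have hwJx : ⟪w, J x⟫ = 0 := by rw [hflip x w, hJxw]; ring
    have hwJy : ⟪w, J y⟫ = 0 := by rw [hflip y w, hJyw]; ring
    have hwJz : ⟪w, J z⟫ = 0 := by rw [hflip z w, hJzw]; ring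
    have hyx : ⟪y,x⟫ = 0 := by rw [real_inner_comm]; exact hxy
    have hzx : ⟪z,x⟫ = 0 := by rw [real_inner_comm]; exact hxz
    have hzy : ⟪z,y⟫ = 0 := by rw [real_inner_comm]; exact hyz
    have hwx : ⟪w,x⟫ = 0 := by rw [real_inner_comm]; exact hxw
    have hwy : ⟪w,y⟫ = 0 := by rw [real_inner_comm]; exact hyw
    have hwz : ⟪w,z⟫ = 0 := by rw [real_inner_comm]; exact hzw
    have hJzy : ⟪J z, y⟫ = 0 := by rw [real_inner_comm]; exact hJyz
    have hJzw2 : ⟪J z, w⟫ = 0 := by rw [real_inner_comm]; exact hwJz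
    -- S (F x y) (F x w) = 0 and S (F z y) (F z w) = 0
    have hA := O1 x y w hx hy hw hxy hJxy hxw hJxw hyw hJyw
    have hB := O1 z y w hz hy hw hzy hzJy hzw hJzw hyw hJyw
    -- first polarization : u = s • (x + z)
    have hu1 : ⟪s • (x + z), s • (x + z)⟫ = 1 := by
      rw [real_inner_smul_left, real_inner_smul_right, real_inner_add_add_self, hx, hz, hxz]
      nlinarith [hs2]
    have huy : ⟪s • (x + z), y⟫ = 0 := by
      rw [real_inner_smul_left, inner_add_left, hxy, hzy]; ring
    have huJy : ⟪s • (x + z), J y⟫ = 0 := by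
      rw [real_inner_smul_left, inner_add_left, hJxy, hzJy]; ring
    have huw : ⟪s • (x + z), w⟫ = 0 := by
      rw [real_inner_smul_left, inner_add_left, hxw, hzw]; ring
    have huJw : ⟪s • (x + z), J w⟫ = 0 := by
      rw [real_inner_smul_left, inner_add_left, hJxw, hJzw]; ring
    have E5 := O1 (s • (x + z)) y w hu1 hy hw huy huJy huw huJw hyw hJyw
    simp only [hFsmulL, hFaddL] at E5
    simp only [hSsmulL, hSsmulR, hSaddL, hSaddR] at E5
    rw [hA, hB] at E5
    have e5 : S (F x y) (F z w) + S (F z y) (F x w) = 0 := by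
      linear_combination 2*E5 - 2*(S (F x y) (F z w) + S (F z y) (F x w))*hss
    -- second polarization : u' = s • (x + J z)
    have hJzJz : ⟪J z, J z⟫ = 1 := by rw [hJg]; exact hz
    have hv1 : ⟪s • (x + J z), s • (x + J z)⟫ = 1 := by
      rw [real_inner_smul_left, real_inner_smul_right, real_inner_add_add_self, hx, hJxz,
        hJzJz]
      nlinarith [hs2]
    have hvy : ⟪s • (x + J z), y⟫ = 0 := by
      rw [real_inner_smul_left, inner_add_left, hxy, hJzy]; ring
    have hvJy : ⟪s • (x + J z), J y⟫ = 0 := by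
      rw [real_inner_smul_left, inner_add_left, hJxy, hJg, hzy]; ring
    have hvw : ⟪s • (x + J z), w⟫ = 0 := by
      rw [real_inner_smul_left, inner_add_left, hxw, hJzw2]; ring
    have hvJw : ⟪s • (x + J z), J w⟫ = 0 := by
      rw [real_inner_smul_left, inner_add_left, hJxw, hJg, hzw]; ring
    have E6 := O1 (s • (x + J z)) y w hv1 hy hw hvy hvJy hvw hvJw hyw hJyw
    simp only [hFsmulL, hFaddL, hFJL] at E6
    simp only [hSsmulL, hSsmulR, hSaddL, hSaddR, Complex.conj_I] at E6
    rw [hA, hB] at E6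
    have e6' : -Complex.I * S (F x y) (F z w) + Complex.I * S (F z y) (F x w) = 0 := by
      linear_combination 2*E6 -
        2*(-Complex.I * S (F x y) (F z w) + Complex.I * S (F z y) (F x w))*hss
    have e6 : S (F x y) (F z w) - S (F z y) (F x w) = 0 := by
      linear_combination Complex.I*e6' +
        (S (F x y) (F z w) - S (F z y) (F x w))*Complex.I_mul_I
    linear_combination 2⁻¹ * e5 + 2⁻¹ * e6
  -- specialize to the unitary basis vectors
  have hpairself : ∀ j k : Fin n, j ≠ k → S (F (a j) (a k)) (F (a j) (a k)) = 2 :=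
    fun j k h => hipself _ _ (orth4 _ _ (ha1 j) (ha1 k) (ha2 j k h) (ha3 j k))
  have hO1' : ∀ p q r : Fin n, p ≠ q → p ≠ r → q ≠ r →
      S (F (a p) (a q)) (F (a p) (a r)) = 0 :=
    fun p q r h1 h2 h3 => O1 _ _ _ (ha1 p) (ha1 q) (ha1 r) (ha2 p q h1) (ha3 p q)
      (ha2 p r h2) (ha3 p r) (ha2 q r h3) (ha3 q r)
  have hO2' : ∀ p q r t : Fin n, p ≠ q → p ≠ r → p ≠ t → q ≠ r → q ≠ t → r ≠ t →
      S (F (a p) (a q)) (F (a r) (a t)) = 0 :=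
    fun p q r t h1 h2 h3 h4 h5 h6 => O2 _ _ _ _ (ha1 p) (ha1 q) (ha1 r) (ha1 t)
      (ha2 p q h1) (ha2 p r h2) (ha2 p t h3) (ha2 q r h4) (ha2 q t h5) (ha2 r t h6)
      (ha3 p q) (ha3 p r) (ha3 p t) (ha3 q r) (ha3 q t) (ha3 r t)
  have hORTH : ∀ j k j' k' : Fin n, j < k → j' < k' → ¬(j = j' ∧ k = k') →
      S (F (a j) (a k)) (F (a j') (a k')) = 0 := by
    intro j k j' k' hjk hj'k' hne
    by_cases h1 : j = j'
    · subst h1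
      exact hO1' j k k' (ne_of_lt hjk) (ne_of_lt hj'k') (fun h => hne ⟨rfl, h⟩)
    · by_cases h2 : k = k'
      · subst h2
        rw [show F (a j) (a k) = -(F (a k) (a j)) from hFswap (a k) (a j),
          show F (a j') (a k) = -(F (a k) (a j')) from hFswap (a k) (a j'),
          hSnegL, hSnegR, neg_neg]
        exact hO1' k j j' (ne_of_lt hjk).symm (ne_of_lt hj'k').symm h1
      · by_cases h3 : j = k'
        · subst h3
          rw [show F (a j') (a j) = -(F (a j) (a j')) from hFswap (a j) (a j'), hSnegR,
            hO1' j k j' (ne_of_lt hjk) (ne_of_lt hj'k').symm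
              (ne_of_lt (hj'k'.trans hjk)).symm, neg_zero]
        · by_cases h4 : k = j'
          · subst h4
            rw [show F (a j) (a k) = -(F (a k) (a j)) from hFswap (a k) (a j), hSnegL,
              hO1' k j k' (ne_of_lt hjk).symm (ne_of_lt hj'k')
                (ne_of_lt (hjk.trans hj'k')), neg_zero]
          · exact hO2' j k j' k' (ne_of_lt hjk) h1 h3 h4 h2 (ne_of_lt hj'k')
  -- reduce the pairing to a sum over the complex basis
  have hrel : ∀ x y z w : V, S (F x y) (F z w) =
      2 * ∑ m : Fin n, φ ![x,y,a m] * conj (φ ![z,w,a m]) := by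
    intro x y z w
    have h0 : S (F x y) (F z w)
        = ∑ i : Fin (2*n), φ ![x,y,b i] * conj (φ ![z,w,b i]) := rfl
    rw [h0, ← Equiv.sum_comp e (fun i => φ ![x,y,b i] * conj (φ ![z,w,b i]))]
    rw [Fintype.sum_sum_type]
    have hl : ∀ m : Fin n, b (e (Sum.inl m)) = a m := fun m => by rw [hb]; simp [hg]
    have hr : ∀ m : Fin n, b (e (Sum.inr m)) = J (a m) := fun m => by rw [hb]; simp [hg]
    have hL : (∑ m : Fin n, φ ![x,y,b (e (Sum.inl m))] * conj (φ ![z,w,b (e (Sum.inl m))]))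
        = ∑ m : Fin n, φ ![x,y,a m] * conj (φ ![z,w,a m]) :=
      Finset.sum_congr rfl fun m _ => by rw [hl]
    have hR : (∑ m : Fin n, φ ![x,y,b (e (Sum.inr m))] * conj (φ ![z,w,b (e (Sum.inr m))]))
        = ∑ m : Fin n, φ ![x,y,a m] * conj (φ ![z,w,a m]) := by
      refine Finset.sum_congr rfl fun m _ => ?_
      rw [hr, hJs2, hJs2, map_mul, Complex.conj_I]
      linear_combination (-(φ ![x,y,a m] * (starRingEnd ℂ) (φ ![z,w,a m]))) * Complex.I_mul_I
    rw [hL, hR]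
    ring
  -- the orthonormal family in ℂⁿ
  set Fv : Fin n → Fin n → EuclideanSpace ℂ (Fin n) :=
    fun j k => WithLp.toLp 2 (fun m => φ ![a j, a k, a m]) with hFv
  have hinner : ∀ j k j' k' : Fin n, (inner ℂ (Fv j' k') (Fv j k) : ℂ) =
      ∑ m : Fin n, φ ![a j, a k, a m] * conj (φ ![a j', a k', a m]) := by
    intro j k j' k'
    simp only [hFv, PiLp.inner_apply, PiLp.toLp_apply, RCLike.inner_apply]
  have horthFv : Orthonormal ℂ
      (fun p : {p : Fin n × Fin n // p.1 < p.2} => Fv p.1.1 p.1.2) := by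
    rw [orthonormal_iff_ite]
    intro p q
    by_cases hpq : p = q
    · subst hpq
      rw [if_pos rfl, hinner]
      have h2 := hpairself p.1.1 p.1.2 (ne_of_lt p.2)
      rw [hrel] at h2
      linear_combination 2⁻¹ * h2
    · rw [if_neg hpq, hinner q.1.1 q.1.2 p.1.1 p.1.2]
      have hne : ¬(q.1.1 = p.1.1 ∧ q.1.2 = p.1.2) :=
        fun h => hpq (Subtype.ext (Prod.ext h.1.symm h.2.symm))
      have h := hORTH q.1.1 q.1.2 p.1.1 p.1.2 q.2 p.2 hne
      rw [hrel] at h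
      linear_combination 2⁻¹ * h
  -- counting
  have hcardle : Fintype.card {p : Fin n × Fin n // p.1 < p.2} ≤ n := by
    have hli := horthFv.linearIndependent
    have hle := hli.fintype_card_le_finrank
    rwa [finrank_euclideanSpace, Fintype.card_fin] at hle
  have heq2 : {p : Fin n × Fin n // p.1 < p.2} ≃ Σ j : Fin n, Fin j.val :=
    { toFun := fun p => ⟨p.1.2, ⟨p.1.1.val, p.2⟩⟩
      invFun := fun t => ⟨(⟨t.2.val, lt_trans t.2.isLt t.1.isLt⟩, t.1), t.2.isLt⟩
      left_inv := fun p => rfl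
      right_inv := fun t => rfl }
  have hcardeq : Fintype.card {p : Fin n × Fin n // p.1 < p.2} = ∑ j : Fin n, j.val := by
    rw [Fintype.card_congr heq2, Fintype.card_sigma]
    exact Finset.sum_congr rfl fun j _ => Fintype.card_fin _
  have hgauss : (∑ j : Fin n, j.val) * 2 = n * (n - 1) := by
    rw [Fin.sum_univ_eq_sum_range (fun i => i)]
    exact Finset.sum_range_id_mul_two n
  have hfinal : n * (n - 1) ≤ n * 2 := by
    calc n * (n - 1) = (∑ j : Fin n, j.val) * 2 := hgauss.symm
      _ ≤ n * 2 := by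
          rw [hcardeq] at hcardle
          omega
  have := Nat.le_of_mul_le_mul_left hfinal (by omega)
  omega
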